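/- Let d ≥ 1, s ∈ (1/2, 1), γ ∈ (1, 2s), q > 1, and z > d(γ−1)/(2s−γ) with z finite. Define θ by 1/(γq) = 1/d + θ(1/q − 2s/d) + (1−θ)/z. If z is sufficiently close to d(γ−1)/(2s−γ) from above and q > (d+2s)/((2s−1)γ′), then θ ∈ [1/(2s), 1/γ), and in particular θγ < 1. -/

import Mathlib

set_option maxHeartbeats 1000000

/-- if `z > d(γ−1)/(2s−γ)` is close enough to this threshold and
`q > (d+2s)/((2s−1)γ′)`, then the Gagliardo–Nirenberg interpolation parameter `θ`
defined by `1/(γq) = 1/d + θ(1/q − 2s/d) + (1−θ)/z` lies in `[1/(2s), 1/γ)`,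
so in particular `θγ < 1`. -/
theorem stmt7 (d : ℕ) (hd : 1 ≤ d) (s γ γ' q : ℝ)
    (hs : 1/2 < s ∧ s < 1)
    (hγ : 1 < γ ∧ γ < 2*s)
    (hγ' : γ' = γ/(γ - 1))
    (hq1 : 1 < q)
    (hq : ((d : ℝ) + 2*s)/((2*s - 1)*γ') < q) :
    ∃ z₀ : ℝ, (d : ℝ)*(γ - 1)/(2*s - γ) < z₀ ∧
      ∀ z θ : ℝ, (d : ℝ)*(γ - 1)/(2*s - γ) < z → z < z₀ →
        1/(γ*q) = 1/(d : ℝ) + θ*(1/q - 2*s/(d : ℝ)) + (1 - θ)/z →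
        1/(2*s) ≤ θ ∧ θ < 1/γ ∧ θ*γ < 1 := by
  obtain ⟨hs1, hs2⟩ := hs
  obtain ⟨hγ1, hγ2⟩ := hγ
  have hd0 : (0:ℝ) < (d:ℝ) := by exact_mod_cast hd
  have hq0 : (0:ℝ) < q := by linarith
  have hγ0 : (0:ℝ) < γ := by linarith
  have hs0 : (0:ℝ) < 2*s - 1 := by linarith
  have hsg : (0:ℝ) < 2*s - γ := by linarith
  have hg1 : (0:ℝ) < γ - 1 := by linarith
  -- key inequality
  have key : (d:ℝ)*(γ-1) < γ*q*(2*s-1) := by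
    rw [hγ'] at hq
    rw [div_lt_iff₀ (by positivity)] at hq
    have e : q * ((2*s-1) * (γ/(γ-1))) * (γ-1) = γ*q*(2*s-1) := by
      field_simp
    nlinarith [mul_lt_mul_of_pos_right hq hg1]
  obtain ⟨m, hm⟩ : ∃ m : ℝ, m = max (1/q - 2*s/(d:ℝ)) ((2*s-γ)/(γ*q*(2*s-1))) := ⟨_, rfl⟩
  have hmt1 : (2*s-γ)/(γ*q*(2*s-1)) ≤ m := hm ▸ le_max_right _ _
  have hmc2 : 1/q - 2*s/(d:ℝ) ≤ m := hm ▸ le_max_left _ _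
  have hm0 : 0 < m := lt_of_lt_of_le (by positivity) hmt1
  have hmts : m < (2*s-γ)/((d:ℝ)*(γ-1)) := by
    rw [hm]
    apply max_lt
    · have hA : (1/q - 2*s/(d:ℝ)) * (q*(d:ℝ)*(γ-1)) = (d:ℝ)*(γ-1) - 2*s*q*(γ-1) := by
        field_simp
      have hB : (2*s-γ)/((d:ℝ)*(γ-1)) * (q*(d:ℝ)*(γ-1)) = (2*s-γ)*q := by
        field_simp
      refine lt_of_mul_lt_mul_right ?_ (show (0:ℝ) ≤ q*(d:ℝ)*(γ-1) by positivity)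
      rw [hA, hB]
      nlinarith [key]
    · exact div_lt_div_of_pos_left hsg (by positivity) key
  refine ⟨1/m, ?_, ?_⟩
  · rw [div_lt_div_iff₀ hsg hm0]
    have := (lt_div_iff₀ (by positivity)).mp hmts
    nlinarith
  · intro z θ hz1 hz2 heq
    have hzstar : (d:ℝ)*(γ-1) < z*(2*s-γ) := by
      rw [div_lt_iff₀ hsg] at hz1; linarith
    have hz0 : 0 < z := by nlinarith
    have hmz : m*z < 1 := by
      have := (lt_div_iff₀ hm0).mp hz2; linarith
    have ht1z : (2*s-γ)/(γ*q*(2*s-1))*z < 1 :=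
      lt_of_le_of_lt (mul_le_mul_of_nonneg_right hmt1 hz0.le) hmz
    have hc2z : (1/q - 2*s/(d:ℝ))*z < 1 :=
      lt_of_le_of_lt (mul_le_mul_of_nonneg_right hmc2 hz0.le) hmz
    have hzup : z*(2*s-γ) < γ*q*(2*s-1) := by
      have h := mul_lt_mul_of_pos_right ht1z (show (0:ℝ) < γ*q*(2*s-1) by positivity)
      calc z*(2*s-γ) = (2*s-γ)/(γ*q*(2*s-1))*z*(γ*q*(2*s-1)) := by field_simp
        _ < 1*(γ*q*(2*s-1)) := h
        _ = γ*q*(2*s-1) := by ring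
    have hK : (d:ℝ)*z - 2*s*q*z - q*(d:ℝ) < 0 := by
      have h := mul_lt_mul_of_pos_right hc2z (show (0:ℝ) < q*(d:ℝ) by positivity)
      calc (d:ℝ)*z - 2*s*q*z - q*(d:ℝ) = (1/q - 2*s/(d:ℝ))*z*(q*(d:ℝ)) - q*(d:ℝ) := by
            field_simp
        _ < 1*(q*(d:ℝ)) - q*(d:ℝ) := by linarith
        _ = 0 := by ring
    have hq' : q ≠ 0 := ne_of_gt hq0
    have hpoly : θ*γ*((d:ℝ)*z - 2*s*q*z - q*(d:ℝ))
        = (d:ℝ)*z - γ*q*z - γ*q*(d:ℝ) := by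
      have hz' : z ≠ 0 := ne_of_gt hz0
      have hγ'' : γ ≠ 0 := ne_of_gt hγ0
      have hD' : (d:ℝ) ≠ 0 := ne_of_gt hd0
      field_simp at heq
      have h2 : q * (θ*γ*((d:ℝ)*z - 2*s*q*z - q*(d:ℝ)))
          = q * ((d:ℝ)*z - γ*q*z - γ*q*(d:ℝ)) := by
        linear_combination -q * heq
      exact mul_left_cancel₀ hq' h2
    have hγK : γ*((d:ℝ)*z - 2*s*q*z - q*(d:ℝ)) < 0 := mul_neg_of_pos_of_neg hγ0 hK
    have hup : θ*γ < 1 := by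
      have h6 : (θ*γ - 1) * ((d:ℝ)*z - 2*s*q*z - q*(d:ℝ))
          = ((d:ℝ)*z - γ*q*z - γ*q*(d:ℝ)) - ((d:ℝ)*z - 2*s*q*z - q*(d:ℝ)) := by
        linear_combination hpoly
      have h7 : 0 < ((d:ℝ)*z - γ*q*z - γ*q*(d:ℝ)) - ((d:ℝ)*z - 2*s*q*z - q*(d:ℝ)) := by
        nlinarith [mul_lt_mul_of_pos_right hzstar hq0]
      nlinarith [h6, h7, hK]
    refine ⟨?_, (lt_div_iff₀ hγ0).mpr hup, hup⟩
    rw [div_le_iff₀ (by linarith : (0:ℝ) < 2*s)]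
    have h2 : 2*s*((d:ℝ)*z - γ*q*z - γ*q*(d:ℝ)) ≤ γ*((d:ℝ)*z - 2*s*q*z - q*(d:ℝ)) := by
      nlinarith [mul_lt_mul_of_pos_right hzup hd0]
    have h5 : (θ*(2*s) - 1) * (γ*((d:ℝ)*z - 2*s*q*z - q*(d:ℝ)))
        = 2*s*((d:ℝ)*z - γ*q*z - γ*q*(d:ℝ)) - γ*((d:ℝ)*z - 2*s*q*z - q*(d:ℝ)) := by
      linear_combination (2*s) * hpoly
    nlinarith [h5, h2, hγK]
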